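/- Corollary 1: Under the hypotheses of Lemma 1, the optimal soft value function of the composed task satisfies V_Σ(s) ≥ V_C*(s) ≥ V_Σ(s) − max_a C*(s,a) for all states s, where V_Σ(s) = log Σ_a exp(Q_Σ(s,a)), V_C*(s) = log Σ_a exp(Q_C*(s,a)), Q_Σ = (Q1*+Q2*)/2, and C* is as in Lemma 1. -/

import Mathlib

lemma sum_exp_pos' {A : Type} [Fintype A] [Nonempty A] (f : A → ℝ) :
    0 < ∑ a, Real.exp (f a) :=
  Finset.sum_pos (fun a _ => Real.exp_pos _) Finset.univ_nonempty

lemma lse_le' {A : Type} [Fintype A] [Nonempty A] (f g : A → ℝ) (M : ℝ)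
    (h : ∀ a, f a ≤ g a + M) :
    Real.log (∑ a, Real.exp (f a)) ≤ Real.log (∑ a, Real.exp (g a)) + M := by
  have h1 : ∑ a, Real.exp (f a) ≤ (∑ a, Real.exp (g a)) * Real.exp M := by
    rw [Finset.sum_mul]
    exact Finset.sum_le_sum fun a _ => by
      rw [← Real.exp_add]; exact Real.exp_le_exp.2 (h a)
  calc Real.log (∑ a, Real.exp (f a))
      ≤ Real.log ((∑ a, Real.exp (g a)) * Real.exp M) :=
        Real.log_le_log (sum_exp_pos' f) h1
    _ = Real.log (∑ a, Real.exp (g a)) + M := by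
        rw [Real.log_mul (ne_of_gt (sum_exp_pos' g)) (ne_of_gt (Real.exp_pos M)),
          Real.log_exp]

lemma lse_avg' {A : Type} [Fintype A] [Nonempty A] (f g : A → ℝ) :
    2 * Real.log (∑ a, Real.exp ((f a + g a) / 2)) ≤
      Real.log (∑ a, Real.exp (f a)) + Real.log (∑ a, Real.exp (g a)) := by
  have key : (∑ a, Real.exp ((f a + g a) / 2)) ^ 2 ≤
      (∑ a, Real.exp (f a)) * (∑ a, Real.exp (g a)) := by
    have h := Finset.sum_mul_sq_le_sq_mul_sq Finset.univ
      (fun a => Real.exp (f a / 2)) (fun a => Real.exp (g a / 2))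
    have e1 : ∀ a : A, Real.exp (f a / 2) * Real.exp (g a / 2) =
        Real.exp ((f a + g a) / 2) := by
      intro a; rw [← Real.exp_add]; ring_nf
    have e2 : ∀ (x : ℝ), Real.exp (x / 2) ^ 2 = Real.exp x := by
      intro x; rw [sq, ← Real.exp_add]; ring_nf
    calc (∑ a, Real.exp ((f a + g a) / 2)) ^ 2
        = (∑ a, Real.exp (f a / 2) * Real.exp (g a / 2)) ^ 2 := by
          congr 1; exact Finset.sum_congr rfl fun a _ => (e1 a).symm
      _ ≤ (∑ a, Real.exp (f a / 2) ^ 2) * ∑ a, Real.exp (g a / 2) ^ 2 := h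
      _ = (∑ a, Real.exp (f a)) * (∑ a, Real.exp (g a)) := by
          congr 1 <;> exact Finset.sum_congr rfl fun a _ => e2 _
  have h2 : Real.log ((∑ a, Real.exp ((f a + g a) / 2)) ^ 2) ≤
      Real.log ((∑ a, Real.exp (f a)) * (∑ a, Real.exp (g a))) :=
    Real.log_le_log (pow_pos (sum_exp_pos' _) 2) key
  rwa [Real.log_pow, Real.log_mul (ne_of_gt (sum_exp_pos' f))
    (ne_of_gt (sum_exp_pos' g))] at h2

/-- Corollary 1: bounds on the optimal soft value function of the composed task. -/
theorem composed_value_bounds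
    {S A : Type} [Fintype S] [Fintype A] [Nonempty A]
    (γ : ℝ) (hγ0 : 0 ≤ γ) (hγ1 : γ < 1)
    (p : S → A → S → ℝ)
    (hp0 : ∀ s a s', 0 ≤ p s a s')
    (hp1 : ∀ s a, ∑ s', p s a s' = 1)
    (r₁ r₂ : S → A → ℝ) (Q₁ Q₂ QC : S → A → ℝ)
    (hQ₁ : ∀ s a, Q₁ s a =
      r₁ s a + γ * ∑ s', p s a s' * Real.log (∑ a', Real.exp (Q₁ s' a')))
    (hQ₂ : ∀ s a, Q₂ s a =
      r₂ s a + γ * ∑ s', p s a s' * Real.log (∑ a', Real.exp (Q₂ s' a')))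
    (hQC : ∀ s a, QC s a =
      (r₁ s a + r₂ s a) / 2 +
        γ * ∑ s', p s a s' * Real.log (∑ a', Real.exp (QC s' a')))
    (π₁ π₂ : S → A → ℝ)
    (hπ₁ : ∀ s a, π₁ s a = Real.exp (Q₁ s a) / ∑ a', Real.exp (Q₁ s a'))
    (hπ₂ : ∀ s a, π₂ s a = Real.exp (Q₂ s a) / ∑ a', Real.exp (Q₂ s a'))
    (C : S → A → ℝ)
    (hC : ∀ s a, C s a =
      γ * ∑ s', p s a s' *
        ((1 / 2) * (-2 * Real.log (∑ a', Real.sqrt (π₁ s' a' * π₂ s' a'))) +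
          Finset.univ.sup' Finset.univ_nonempty (fun a' => C s' a'))) :
    ∀ s : S,
      Real.log (∑ a, Real.exp (QC s a)) ≤
        Real.log (∑ a, Real.exp ((Q₁ s a + Q₂ s a) / 2)) ∧
      Real.log (∑ a, Real.exp ((Q₁ s a + Q₂ s a) / 2)) -
          Finset.univ.sup' Finset.univ_nonempty (fun a => C s a) ≤
        Real.log (∑ a, Real.exp (QC s a)) := by
  intro s₀
  haveI : Nonempty S := ⟨s₀⟩
  -- abbreviations
  set V₁ : S → ℝ := fun s => Real.log (∑ a, Real.exp (Q₁ s a)) with hV₁def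
  set V₂ : S → ℝ := fun s => Real.log (∑ a, Real.exp (Q₂ s a)) with hV₂def
  set VC : S → ℝ := fun s => Real.log (∑ a, Real.exp (QC s a)) with hVCdef
  set Vsig : S → ℝ := fun s => Real.log (∑ a, Real.exp ((Q₁ s a + Q₂ s a) / 2))
    with hVsigdef
  set MC : S → ℝ := fun s => Finset.univ.sup' Finset.univ_nonempty (fun a => C s a)
    with hMCdef
  -- the key Rényi-divergence identity
  have hid : ∀ s : S,
      (1 / 2 : ℝ) * (-2 * Real.log (∑ a, Real.sqrt (π₁ s a * π₂ s a))) =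
        (V₁ s + V₂ s) / 2 - Vsig s := by
    intro s
    have S₁pos : 0 < ∑ a, Real.exp (Q₁ s a) := sum_exp_pos' _
    have S₂pos : 0 < ∑ a, Real.exp (Q₂ s a) := sum_exp_pos' _
    have Ssigpos : 0 < ∑ a, Real.exp ((Q₁ s a + Q₂ s a) / 2) := sum_exp_pos' _
    have hsum : ∑ a, Real.sqrt (π₁ s a * π₂ s a) =
        (∑ a, Real.exp ((Q₁ s a + Q₂ s a) / 2)) /
          Real.sqrt ((∑ a, Real.exp (Q₁ s a)) * (∑ a, Real.exp (Q₂ s a))) := by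
      rw [Finset.sum_div]
      refine Finset.sum_congr rfl fun a _ => ?_
      rw [hπ₁ s a, hπ₂ s a]
      rw [div_mul_div_comm, Real.sqrt_div' _ (mul_pos S₁pos S₂pos).le]
      · congr 1
        rw [← Real.exp_add, Real.exp_half]
    rw [hsum, Real.log_div (ne_of_gt Ssigpos)
        (ne_of_gt (Real.sqrt_pos.2 (mul_pos S₁pos S₂pos))),
      Real.log_sqrt (mul_pos S₁pos S₂pos).le,
      Real.log_mul (ne_of_gt S₁pos) (ne_of_gt S₂pos)]
    simp only [hV₁def, hV₂def, hVsigdef]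
    ring
  -- rewrite C recursion
  have hC' : ∀ s a, C s a =
      γ * ∑ s', p s a s' * ((V₁ s' + V₂ s') / 2 - Vsig s' + MC s') := by
    intro s a
    rw [hC s a]
    congr 1
    refine Finset.sum_congr rfl fun s' _ => ?_
    rw [hid s']
  -- Δ ≥ 0
  have hΔ : ∀ s, Vsig s ≤ (V₁ s + V₂ s) / 2 := by
    intro s
    have := lse_avg' (fun a => Q₁ s a) (fun a => Q₂ s a)
    simp only [hV₁def, hV₂def, hVsigdef]
    linarith
  -- recursion for QΣ
  have hQsig : ∀ s a, (Q₁ s a + Q₂ s a) / 2 =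
      (r₁ s a + r₂ s a) / 2 + γ * ∑ s', p s a s' * ((V₁ s' + V₂ s') / 2) := by
    intro s a
    have e : ∑ s', p s a s' * ((V₁ s' + V₂ s') / 2) =
        ((∑ s', p s a s' * V₁ s') + ∑ s', p s a s' * V₂ s') / 2 := by
      rw [← Finset.sum_add_distrib, Finset.sum_div]
      exact Finset.sum_congr rfl fun s' _ => by ring
    rw [e, hQ₁ s a, hQ₂ s a]
    ring
  -- recursion for QC in terms of VC
  have hQC' : ∀ s a, QC s a =
      (r₁ s a + r₂ s a) / 2 + γ * ∑ s', p s a s' * VC s' := hQC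
  ---- Upper bound: QC ≤ QΣ
  have hub : ∀ s a, QC s a ≤ (Q₁ s a + Q₂ s a) / 2 := by
    set M : ℝ := Finset.univ.sup' Finset.univ_nonempty
      (fun q : S × A => QC q.1 q.2 - (Q₁ q.1 q.2 + Q₂ q.1 q.2) / 2) with hMdef
    have hle : ∀ s a, QC s a - (Q₁ s a + Q₂ s a) / 2 ≤ M := fun s a =>
      Finset.le_sup' (f := fun q : S × A => QC q.1 q.2 - (Q₁ q.1 q.2 + Q₂ q.1 q.2) / 2)
        (Finset.mem_univ (s, a))
    have hstep : ∀ s a, QC s a - (Q₁ s a + Q₂ s a) / 2 ≤ γ * M := by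
      intro s a
      have e : QC s a - (Q₁ s a + Q₂ s a) / 2 =
          γ * ∑ s', p s a s' * (VC s' - (V₁ s' + V₂ s') / 2) := by
        rw [hQC' s a, hQsig s a]
        have : ∑ s', p s a s' * (VC s' - (V₁ s' + V₂ s') / 2) =
            (∑ s', p s a s' * VC s') - ∑ s', p s a s' * ((V₁ s' + V₂ s') / 2) := by
          rw [← Finset.sum_sub_distrib]
          exact Finset.sum_congr rfl fun s' _ => by ring
        rw [this]; ring
      rw [e]
      have hbound : ∑ s', p s a s' * (VC s' - (V₁ s' + V₂ s') / 2) ≤ M := by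
        calc ∑ s', p s a s' * (VC s' - (V₁ s' + V₂ s') / 2)
            ≤ ∑ s', p s a s' * M := by
              refine Finset.sum_le_sum fun s' _ => ?_
              refine mul_le_mul_of_nonneg_left ?_ (hp0 s a s')
              have h1 : VC s' ≤ Vsig s' + M :=
                lse_le' (fun a' => QC s' a') (fun a' => (Q₁ s' a' + Q₂ s' a') / 2) M
                  (fun a' => by linarith [hle s' a'])
              linarith [hΔ s']
          _ = M := by rw [← Finset.sum_mul, hp1 s a, one_mul]
      exact mul_le_mul_of_nonneg_left hbound hγ0
    have hM0 : M ≤ 0 := by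
      obtain ⟨q, -, hq⟩ := Finset.exists_mem_eq_sup' (Finset.univ_nonempty)
        (fun q : S × A => QC q.1 q.2 - (Q₁ q.1 q.2 + Q₂ q.1 q.2) / 2)
      have hMq : M = QC q.1 q.2 - (Q₁ q.1 q.2 + Q₂ q.1 q.2) / 2 := hMdef.trans hq
      nlinarith [hstep q.1 q.2, hMq]
    intro s a
    linarith [hle s a, hM0]
  ---- Lower bound: QΣ - C ≤ QC
  have hlb : ∀ s a, (Q₁ s a + Q₂ s a) / 2 - C s a ≤ QC s a := by
    set N : ℝ := Finset.univ.sup' Finset.univ_nonempty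
      (fun q : S × A => (Q₁ q.1 q.2 + Q₂ q.1 q.2) / 2 - C q.1 q.2 - QC q.1 q.2)
      with hNdef
    have hle : ∀ s a, (Q₁ s a + Q₂ s a) / 2 - C s a - QC s a ≤ N := fun s a =>
      Finset.le_sup'
        (f := fun q : S × A => (Q₁ q.1 q.2 + Q₂ q.1 q.2) / 2 - C q.1 q.2 - QC q.1 q.2)
        (Finset.mem_univ (s, a))
    have hCle : ∀ s a, C s a ≤ MC s := fun s a =>
      Finset.le_sup' (f := fun a => C s a) (Finset.mem_univ a)
    have hstep : ∀ s a, (Q₁ s a + Q₂ s a) / 2 - C s a - QC s a ≤ γ * N := by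
      intro s a
      have e : (Q₁ s a + Q₂ s a) / 2 - C s a - QC s a =
          γ * ∑ s', p s a s' * (Vsig s' - MC s' - VC s') := by
        rw [hQsig s a, hC' s a, hQC' s a]
        have : ∑ s', p s a s' * (Vsig s' - MC s' - VC s') =
            (∑ s', p s a s' * ((V₁ s' + V₂ s') / 2))
              - (∑ s', p s a s' * ((V₁ s' + V₂ s') / 2 - Vsig s' + MC s'))
              - ∑ s', p s a s' * VC s' := by
          rw [← Finset.sum_sub_distrib, ← Finset.sum_sub_distrib]
          exact Finset.sum_congr rfl fun s' _ => by ring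
        rw [this]; ring
      rw [e]
      have hbound : ∑ s', p s a s' * (Vsig s' - MC s' - VC s') ≤ N := by
        calc ∑ s', p s a s' * (Vsig s' - MC s' - VC s')
            ≤ ∑ s', p s a s' * N := by
              refine Finset.sum_le_sum fun s' _ => ?_
              refine mul_le_mul_of_nonneg_left ?_ (hp0 s a s')
              have h1 : Vsig s' ≤ VC s' + (N + MC s') :=
                lse_le' (fun a' => (Q₁ s' a' + Q₂ s' a') / 2) (fun a' => QC s' a')
                  (N + MC s')
                  (fun a' => by linarith [hle s' a', hCle s' a'])
              linarith
          _ = N := by rw [← Finset.sum_mul, hp1 s a, one_mul]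
      exact mul_le_mul_of_nonneg_left hbound hγ0
    have hN0 : N ≤ 0 := by
      obtain ⟨q, -, hq⟩ := Finset.exists_mem_eq_sup' (Finset.univ_nonempty)
        (fun q : S × A => (Q₁ q.1 q.2 + Q₂ q.1 q.2) / 2 - C q.1 q.2 - QC q.1 q.2)
      have hNq : N = (Q₁ q.1 q.2 + Q₂ q.1 q.2) / 2 - C q.1 q.2 - QC q.1 q.2 := hNdef.trans hq
      nlinarith [hstep q.1 q.2, hNq]
    intro s a
    linarith [hle s a, hN0]
  ---- conclude
  constructor
  · have h := lse_le' (fun a => QC s₀ a) (fun a => (Q₁ s₀ a + Q₂ s₀ a) / 2) 0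
      (fun a => by linarith [hub s₀ a])
    simpa using h
  · have h := lse_le' (fun a => (Q₁ s₀ a + Q₂ s₀ a) / 2) (fun a => QC s₀ a) (MC s₀)
      (fun a => by
        have := hlb s₀ a
        have := Finset.le_sup' (f := fun a => C s₀ a) (Finset.mem_univ a)
        linarith)
    simp only [hMCdef] at h ⊢
    linarith
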